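/- arXiv:2002.09167 — 2 statements merged into one kernel-verified Lean document; each statement's English description precedes it below -/
import Mathlib

section
/- Let H be a complex Hilbert space and T a bounded linear operator on H that has a bounded inverse. Then T is minimaloid if and only if T⁻¹ is normaloid. -/
/-- The minimum modulus of `T`: `m(T) = inf {‖T x‖ : ‖x‖ = 1}`. -/
noncomputable def minModulus {H₁ H₂ : Type*} [NormedAddCommGroup H₁] [InnerProductSpace ℂ H₁]
    [NormedAddCommGroup H₂] [InnerProductSpace ℂ H₂] (T : H₁ →L[ℂ] H₂) : ℝ :=
  sInf {r : ℝ | ∃ x : H₁, ‖x‖ = 1 ∧ r = ‖T x‖}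

/-- `T` is minimaloid if `m(T) = inf {|λ| : λ ∈ σ(T)}`. -/
def Minimaloid {H : Type*} [NormedAddCommGroup H] [InnerProductSpace ℂ H] [CompleteSpace H]
    (T : H →L[ℂ] H) : Prop :=
  minModulus T = sInf {r : ℝ | ∃ z ∈ spectrum ℂ T, r = ‖z‖}

/-- `S` is normaloid if its norm equals its spectral radius
`r(S) = sup {|λ| : λ ∈ σ(S)}`. -/
def Normaloid {H : Type*} [NormedAddCommGroup H] [InnerProductSpace ℂ H] [CompleteSpace H]
    (S : H →L[ℂ] H) : Prop :=
  (‖S‖₊ : ENNReal) = spectralRadius ℂ S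

theorem minimaloid_iff_inverse_normaloid
    {H : Type*} [NormedAddCommGroup H] [InnerProductSpace ℂ H] [CompleteSpace H]
    (T : H →L[ℂ] H) (hT : IsUnit T) :
    Minimaloid T ↔ Normaloid (Ring.inverse T) := by
  rcases subsingleton_or_nontrivial H with hH | hH
  · -- trivial space: both properties hold
    have hspec : spectrum ℂ T = ∅ := by
      ext z
      simp only [Set.mem_empty_iff_false, iff_false]
      exact fun h => h (isUnit_of_subsingleton _)
    have hA : {r : ℝ | ∃ x : H, ‖x‖ = 1 ∧ r = ‖T x‖} = ∅ := by
      ext r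
      simp only [Set.mem_setOf_eq, Set.mem_empty_iff_false, iff_false]
      rintro ⟨x, hx, -⟩
      rw [Subsingleton.elim x 0, norm_zero] at hx
      exact one_ne_zero hx.symm
    constructor <;> intro _
    · show (‖Ring.inverse T‖₊ : ENNReal) = spectralRadius ℂ (Ring.inverse T)
      haveI : Subsingleton (H →L[ℂ] H) :=
        ⟨fun a b => ContinuousLinearMap.ext fun x => Subsingleton.elim _ _⟩
      have h0 : (Ring.inverse T : H →L[ℂ] H) = 0 := Subsingleton.elim _ _
      have hspec0 : spectrum ℂ (0 : H →L[ℂ] H) = ∅ := by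
        ext z
        simp only [Set.mem_empty_iff_false, iff_false]
        exact fun h => h (isUnit_of_subsingleton _)
      rw [h0]
      unfold spectralRadius
      rw [hspec0]
      simp
    · show minModulus T = _
      rw [minModulus, hA, hspec]
      simp
  · set S := Ring.inverse T with hSdef
    have hST : ∀ x : H, S (T x) = x := fun x => by
      have h := Ring.inverse_mul_cancel T hT
      calc S (T x) = (S * T) x := rfl
        _ = x := by rw [h]; rfl
    have hTS : ∀ x : H, T (S x) = x := fun x => by
      have h := Ring.mul_inverse_cancel T hT
      calc T (S x) = (T * S) x := rfl
        _ = x := by rw [h]; rfl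
    obtain ⟨y₀, hy₀⟩ := exists_ne (0 : H)
    have hSpos : 0 < ‖S‖ := by
      rw [norm_pos_iff]
      intro h
      apply hy₀
      rw [← hST y₀, h]
      rfl
    set A := {r : ℝ | ∃ x : H, ‖x‖ = 1 ∧ r = ‖T x‖} with hAdef
    have hAne : A.Nonempty :=
      ⟨‖T (((‖y₀‖ : ℂ))⁻¹ • y₀)‖, ((‖y₀‖ : ℂ))⁻¹ • y₀, norm_smul_inv_norm hy₀, rfl⟩
    have hAlb : ∀ r ∈ A, ‖S‖⁻¹ ≤ r := by
      rintro r ⟨x, hx, rfl⟩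
      have h1 : 1 ≤ ‖S‖ * ‖T x‖ := by
        calc (1 : ℝ) = ‖S (T x)‖ := by rw [hST, hx]
          _ ≤ ‖S‖ * ‖T x‖ := S.le_opNorm (T x)
      nlinarith [mul_inv_cancel₀ hSpos.ne', norm_nonneg (T x)]
    have hbdd : BddBelow A := ⟨‖S‖⁻¹, hAlb⟩
    have hmlb : ‖S‖⁻¹ ≤ sInf A := le_csInf hAne hAlb
    have hInfPos : 0 < sInf A := lt_of_lt_of_le (inv_pos.mpr hSpos) hmlb
    have hSle : ‖S‖ ≤ (sInf A)⁻¹ := by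
      refine S.opNorm_le_bound (inv_nonneg.mpr hInfPos.le) fun y => ?_
      by_cases hy : y = 0
      · simp [hy]
      · have hSy : S y ≠ 0 := fun h => hy (by rw [← hTS y, h, map_zero])
        have hSypos : 0 < ‖S y‖ := norm_pos_iff.mpr hSy
        set x := ((‖S y‖ : ℂ))⁻¹ • S y with hxdef
        have hx1 : ‖x‖ = 1 := norm_smul_inv_norm hSy
        have hTx : ‖T x‖ = ‖y‖ / ‖S y‖ := by
          rw [hxdef, map_smul, hTS, norm_smul]
          simp [norm_inv, div_eq_inv_mul]
        have hmem : ‖y‖ / ‖S y‖ ∈ A := ⟨x, hx1, hTx.symm⟩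
        have h2 : sInf A ≤ ‖y‖ / ‖S y‖ := csInf_le hbdd hmem
        have h3 : sInf A * ‖S y‖ ≤ ‖y‖ := by
          rw [← le_div_iff₀ hSypos]; exact h2
        calc ‖S y‖ = (sInf A)⁻¹ * (sInf A * ‖S y‖) := by
              rw [← mul_assoc, inv_mul_cancel₀ hInfPos.ne', one_mul]
          _ ≤ (sInf A)⁻¹ * ‖y‖ :=
              mul_le_mul_of_nonneg_left h3 (inv_nonneg.mpr hInfPos.le)
    have hub : sInf A ≤ ‖S‖⁻¹ := by
      have := one_div_le_one_div_of_le hSpos hSle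
      rwa [one_div, one_div, inv_inv] at this
    have hmEq : minModulus T = ‖S‖⁻¹ := le_antisymm hub hmlb
    -- spectral side
    have hSU : IsUnit S := by
      rw [hSdef, ← hT.unit_spec, Ring.inverse_unit]
      exact (hT.unit⁻¹).isUnit
    have hσS : spectrum ℂ S = (spectrum ℂ T)⁻¹ := by
      conv_lhs => rw [hSdef, ← hT.unit_spec, Ring.inverse_unit]
      rw [← spectrum.map_inv hT.unit, hT.unit_spec]
    obtain ⟨μ, hμ, hμr⟩ :=
      spectrum.exists_nnnorm_eq_spectralRadius_of_nonempty (a := S) (spectrum.nonempty S)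
    have hμ0 : μ ≠ 0 := by
      rintro rfl
      exact spectrum.zero_notMem ℂ hSU hμ
    have hμpos : 0 < ‖μ‖ := norm_pos_iff.mpr hμ0
    have hμT : μ⁻¹ ∈ spectrum ℂ T := by
      have h : μ ∈ (spectrum ℂ T)⁻¹ := hσS ▸ hμ
      rwa [Set.mem_inv] at h
    set B := {r : ℝ | ∃ z ∈ spectrum ℂ T, r = ‖z‖} with hBdef
    have hBmem : ‖μ‖⁻¹ ∈ B :=
      ⟨μ⁻¹, hμT, by rw [norm_inv]⟩
    have hBlb : ∀ r ∈ B, ‖μ‖⁻¹ ≤ r := by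
      rintro r ⟨z, hz, rfl⟩
      have hz0 : z ≠ 0 := by
        rintro rfl
        exact spectrum.zero_notMem ℂ hT hz
      have hzpos : 0 < ‖z‖ := norm_pos_iff.mpr hz0
      have hzS : z⁻¹ ∈ spectrum ℂ S := by
        rw [hσS, Set.mem_inv, inv_inv]; exact hz
      have h1 : (‖z⁻¹‖₊ : ENNReal) ≤ spectralRadius ℂ S := by
        unfold spectralRadius
        exact le_iSup₂ (f := fun k (_ : k ∈ spectrum ℂ S) => (‖k‖₊ : ENNReal)) z⁻¹ hzS
      rw [← hμr] at h1
      have h2 : ‖z⁻¹‖ ≤ ‖μ‖ := by exact_mod_cast h1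
      rw [norm_inv] at h2
      -- from ‖z‖⁻¹ ≤ ‖μ‖ conclude ‖μ‖⁻¹ ≤ ‖z‖
      nlinarith [mul_inv_cancel₀ hμpos.ne', mul_inv_cancel₀ hzpos.ne',
        mul_pos hμpos hzpos]
    have hBeq : sInf B = ‖μ‖⁻¹ :=
      le_antisymm (csInf_le ⟨‖μ‖⁻¹, hBlb⟩ hBmem) (le_csInf ⟨_, hBmem⟩ hBlb)
    have hNorm : Normaloid S ↔ ‖S‖ = ‖μ‖ := by
      rw [Normaloid, ← hμr]
      constructor
      · intro h
        have h' : ‖S‖₊ = ‖μ‖₊ := by exact_mod_cast h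
        calc ‖S‖ = (‖S‖₊ : ℝ) := (coe_nnnorm S).symm
          _ = (‖μ‖₊ : ℝ) := by rw [h']
          _ = ‖μ‖ := coe_nnnorm μ
      · intro h
        have h' : ‖S‖₊ = ‖μ‖₊ := NNReal.coe_injective (by simpa using h)
        exact_mod_cast congrArg (fun t : NNReal => (t : ENNReal)) h'
    rw [Minimaloid, hmEq, ← hBdef, hBeq, hNorm]
    exact ⟨fun h => inv_injective h, fun h => by rw [h]⟩
end

section
/- Let H be a complex Hilbert space and T an absolutely minimum attaining bounded linear operator on H such that both T and its adjoint T* are injective. Then T is invertible (bijective with bounded inverse); equivalently, 0 does not belong to the spectrum of T. -/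
/-- `T` is absolutely minimum attaining if for every nonzero closed subspace `M` of the domain,
there is a unit vector `x ∈ M` with `‖T x‖ = inf {‖T y‖ : y ∈ M, ‖y‖ = 1}`. -/
def AbsMinAttaining {H₁ H₂ : Type*} [NormedAddCommGroup H₁] [InnerProductSpace ℂ H₁]
    [NormedAddCommGroup H₂] [InnerProductSpace ℂ H₂] (T : H₁ →L[ℂ] H₂) : Prop :=
  ∀ M : Submodule ℂ H₁, IsClosed (M : Set H₁) → M ≠ ⊥ →
    ∃ x, x ∈ M ∧ ‖x‖ = 1 ∧ ‖T x‖ = sInf {r : ℝ | ∃ y ∈ M, ‖y‖ = 1 ∧ r = ‖T y‖}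

theorem absMinAttaining_injective_adjoint_injective_isUnit
    {H : Type*} [NormedAddCommGroup H] [InnerProductSpace ℂ H] [CompleteSpace H]
    (T : H →L[ℂ] H) (hT : AbsMinAttaining T)
    (hinj : Function.Injective T)
    (hinj' : Function.Injective (ContinuousLinearMap.adjoint T)) :
    IsUnit T ∧ (0 : ℂ) ∉ spectrum ℂ T := by
  have key : IsUnit T := by
    by_cases hH : (⊤ : Submodule ℂ H) = ⊥
    · have hsub : Subsingleton H := by
        rw [Submodule.eq_bot_iff] at hH
        exact ⟨fun a b => (hH a trivial).trans (hH b trivial).symm⟩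
      exact ⟨1, Subsingleton.elim _ _⟩
    · obtain ⟨x, -, hx1, hx2⟩ := hT ⊤ (by simp [Submodule.top_coe]) hH
      set c : ℝ := ‖T x‖ with hc
      have hxne : x ≠ 0 := by
        intro h; rw [h, norm_zero] at hx1; norm_num at hx1
      have hcpos : 0 < c := by
        rcases (norm_nonneg (T x)).lt_or_eq with h | h
        · exact h
        · exact absurd (hinj (by simpa [← h] using (norm_eq_zero.mp h.symm) : T x = T 0))
            hxne
      -- lower bound: for all unit y, c ≤ ‖T y‖
      have hlb : ∀ y : H, ‖y‖ = 1 → c ≤ ‖T y‖ := by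
        intro y hy
        have hbdd : BddBelow {r : ℝ | ∃ z ∈ (⊤ : Submodule ℂ H), ‖z‖ = 1 ∧ r = ‖T z‖} := by
          refine ⟨0, fun r hr => ?_⟩
          obtain ⟨z, -, -, rfl⟩ := hr
          exact norm_nonneg _
        have : ‖T y‖ ∈ {r : ℝ | ∃ z ∈ (⊤ : Submodule ℂ H), ‖z‖ = 1 ∧ r = ‖T z‖} :=
          ⟨y, trivial, hy, rfl⟩
        calc c = sInf _ := hx2
          _ ≤ ‖T y‖ := csInf_le hbdd this
      -- T is bounded below
      have hbound : ∀ y : H, c * ‖y‖ ≤ ‖T y‖ := by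
        intro y
        rcases eq_or_ne y 0 with rfl | hy
        · simp
        · have hny : ‖y‖ ≠ 0 := norm_ne_zero_iff.mpr hy
          have h1 : ‖(‖y‖⁻¹ : ℂ) • y‖ = 1 := by
            rw [norm_smul]
            simp [abs_of_nonneg (norm_nonneg y), hny]
          have := hlb _ h1
          rw [map_smul, norm_smul] at this
          have h2 : ‖(‖y‖⁻¹ : ℂ)‖ = ‖y‖⁻¹ := by
            simp [abs_of_nonneg (norm_nonneg y)]
          rw [h2] at this
          calc c * ‖y‖ ≤ (‖y‖⁻¹ * ‖T y‖) * ‖y‖ := by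
                exact mul_le_mul_of_nonneg_right this (norm_nonneg y)
            _ = ‖T y‖ := by field_simp
      have hanti : AntilipschitzWith (⟨c, hcpos.le⟩ : NNReal)⁻¹ T := by
        refine ContinuousLinearMap.antilipschitz_of_bound T fun y => ?_
        change ‖y‖ ≤ c⁻¹ * ‖T y‖
        rw [le_inv_mul_iff₀ hcpos]
        exact hbound y
      -- range is closed
      have hker : LinearMap.ker (T : H →ₗ[ℂ] H) = ⊥ := LinearMap.ker_eq_bot_of_injective hinj
      have hclosed : IsClosed ((LinearMap.range (T : H →ₗ[ℂ] H) : Submodule ℂ H) : Set H) := by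
        simpa [LinearMap.coe_range] using hanti.isClosed_range T.uniformContinuous
      have : CompleteSpace (LinearMap.range (T : H →ₗ[ℂ] H) : Submodule ℂ H) :=
        hclosed.completeSpace_coe
      -- range is dense: orthogonal is ker of adjoint which is trivial
      have horth : (LinearMap.range (T : H →ₗ[ℂ] H) : Submodule ℂ H)ᗮ = ⊥ := by
        rw [Submodule.eq_bot_iff]
        intro v hv
        apply hinj'
        rw [map_zero]
        rw [← inner_self_eq_zero (𝕜 := ℂ) (x := ContinuousLinearMap.adjoint T v)]
        have h0 : (inner ℂ (T (ContinuousLinearMap.adjoint T v)) v : ℂ) = 0 :=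
          hv _ ⟨ContinuousLinearMap.adjoint T v, rfl⟩
        rw [ContinuousLinearMap.adjoint_inner_left, ← inner_conj_symm, h0, map_zero]
      have hrange : LinearMap.range (T : H →ₗ[ℂ] H) = ⊤ :=
        (Submodule.orthogonal_eq_bot_iff).mp horth
      let e := ContinuousLinearEquiv.ofBijective T hker hrange
      have he : (e : H →L[ℂ] H) = T := rfl
      refine ⟨⟨(e : H →L[ℂ] H), (e.symm : H →L[ℂ] H), ?_, ?_⟩, he⟩
      · ext y; simp
      · ext y; simp
  exact ⟨key, spectrum.zero_notMem ℂ key⟩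
end
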